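/- Let 0 < b < Λ and suppose (μ/σ)·(T_max/T_min)^{σ−1}·(Λ+b)/(Λ−b) < 1. Then there exists a constant L_w > 0, depending only on μ, σ, F, T_min, T_max, Λ, b and Φ, such that for all λ₁, λ₂ ∈ L¹(Ω) with Λ − b ≤ ‖λᵢ‖_{L¹} ≤ Λ + b, if W₁, W₂ ∈ C_{0+}(Ω) are the solutions of the wage fixed-point equations for λ₁ and λ₂ respectively, then ‖W₁ − W₂‖_∞ ≤ L_w · ‖λ₁ − λ₂‖_{L¹}. -/

import Mathlib

open MeasureTheory Real Set

set_option maxHeartbeats 2000000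

/-- The price index operator `G[λ](x) = [(1/F) ∫_Ω |λ(y)| T(x,y)^{1-σ} dy]^{1/(1-σ)}`. -/
noncomputable def priceIndex {n : ℕ} (Ω : Set (Fin n → ℝ)) (F σ : ℝ)
    (T : (Fin n → ℝ) → (Fin n → ℝ) → ℝ) (lam : (Fin n → ℝ) → ℝ)
    (x : Fin n → ℝ) : ℝ :=
  ((1 / F) * ∫ y in Ω, |lam y| * T x y ^ (1 - σ)) ^ (1 / (1 - σ))

/-- `W` is a nonnegative continuous solution on `Ω` of the wage fixed-point equation for `lam`. -/
def IsWageSolution {n : ℕ} (Ω : Set (Fin n → ℝ)) (F σ μ : ℝ)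
    (T : (Fin n → ℝ) → (Fin n → ℝ) → ℝ) (φ lam W : (Fin n → ℝ) → ℝ) : Prop :=
  ContinuousOn W Ω ∧ (∀ x ∈ Ω, 0 ≤ W x) ∧
  ∀ x ∈ Ω, W x = (μ / (σ * F)) *
    ∫ y in Ω, (W y * |lam y| + φ y) * priceIndex Ω F σ T lam y ^ (σ - 1) * T x y ^ (1 - σ)

/-- Sup norm of `f` over the region `Ω`. -/
noncomputable def supNormOn {n : ℕ} (Ω : Set (Fin n → ℝ)) (f : (Fin n → ℝ) → ℝ) : ℝ :=
  sSup ((fun x => |f x|) '' Ω)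

theorem wage_solution_lipschitz {n : ℕ} (Ω : Set (Fin n → ℝ))
    (hΩc : IsCompact Ω) (hΩpos : 0 < volume Ω)
    (T : (Fin n → ℝ) → (Fin n → ℝ) → ℝ)
    (hTcont : ContinuousOn (fun p : (Fin n → ℝ) × (Fin n → ℝ) => T p.1 p.2) (Ω ×ˢ Ω))
    (Tmin Tmax : ℝ) (hTmin : 1 ≤ Tmin)
    (hT : ∀ x ∈ Ω, ∀ y ∈ Ω, T x y ∈ Icc Tmin Tmax)
    (σ μ F Λ Φ : ℝ) (hσ : 1 < σ) (hμ : μ ∈ Ioo (0 : ℝ) 1) (hF : 0 < F)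
    (hΛ : 0 < Λ) (hΦ : 0 < Φ)
    (φ : (Fin n → ℝ) → ℝ) (hφint : IntegrableOn φ Ω)
    (hφ0 : ∀ᵐ x ∂(volume.restrict Ω), 0 ≤ φ x) (hφΦ : (∫ x in Ω, φ x) = Φ)
    (b : ℝ) (hb : 0 < b) (hbΛ : b < Λ)
    (hcond : μ / σ * (Tmax / Tmin) ^ (σ - 1) * ((Λ + b) / (Λ - b)) < 1) :
    ∃ Lw : ℝ, 0 < Lw ∧
      ∀ lam₁ lam₂ : (Fin n → ℝ) → ℝ,
        IntegrableOn lam₁ Ω → IntegrableOn lam₂ Ω →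
        Λ - b ≤ (∫ x in Ω, |lam₁ x|) → (∫ x in Ω, |lam₁ x|) ≤ Λ + b →
        Λ - b ≤ (∫ x in Ω, |lam₂ x|) → (∫ x in Ω, |lam₂ x|) ≤ Λ + b →
        ∀ W₁ W₂ : (Fin n → ℝ) → ℝ,
          IsWageSolution Ω F σ μ T φ lam₁ W₁ → IsWageSolution Ω F σ μ T φ lam₂ W₂ →
          supNormOn Ω (fun x => W₁ x - W₂ x) ≤ Lw * ∫ x in Ω, |lam₁ x - lam₂ x| := by
  obtain ⟨hμ0, hμ1⟩ := hμ
  have hΩm : MeasurableSet Ω := hΩc.measurableSet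
  have hΩne : Ω.Nonempty := nonempty_of_measure_ne_zero (ne_of_gt hΩpos)
  obtain ⟨x₀, hx₀⟩ := hΩne
  have hσ0 : (0:ℝ) < σ := lt_trans one_pos hσ
  have hs : (0:ℝ) < σ - 1 := by linarith
  have hΛb : (0:ℝ) < Λ - b := by linarith
  have hTmin0 : (0:ℝ) < Tmin := lt_of_lt_of_le one_pos hTmin
  have hTmm : Tmin ≤ Tmax := le_trans (hT x₀ hx₀ x₀ hx₀).1 (hT x₀ hx₀ x₀ hx₀).2
  have hTmax1 : (1:ℝ) ≤ Tmax := le_trans hTmin hTmm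
  have hTmax0 : (0:ℝ) < Tmax := lt_of_lt_of_le one_pos hTmax1
  set P : ℝ := Tmax ^ (σ - 1) with hPdef
  set Q : ℝ := Tmin ^ (1 - σ) with hQdef
  have hP1 : (1:ℝ) ≤ P := Real.one_le_rpow hTmax1 (le_of_lt hs)
  have hP0 : (0:ℝ) < P := lt_of_lt_of_le one_pos hP1
  have hQ0 : (0:ℝ) < Q := Real.rpow_pos_of_pos hTmin0 _
  have hQ1 : Q ≤ 1 := Real.rpow_le_one_of_one_le_of_nonpos hTmin (by linarith)
  -- bounds for T x y ^ (1 - σ)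
  have hTpow : ∀ x ∈ Ω, ∀ y ∈ Ω,
      P⁻¹ ≤ T x y ^ (1 - σ) ∧ T x y ^ (1 - σ) ≤ Q := by
    intro x hx y hy
    obtain ⟨h1, h2⟩ := hT x hx y hy
    have hTxy0 : (0:ℝ) < T x y := lt_of_lt_of_le hTmin0 h1
    constructor
    · have h3 : Tmax ^ (1 - σ) ≤ T x y ^ (1 - σ) :=
        Real.rpow_le_rpow_of_nonpos hTxy0 h2 (by linarith)
      calc P⁻¹ = Tmax ^ (1 - σ) := by
            rw [hPdef, show (1 - σ) = -(σ - 1) by ring, Real.rpow_neg (le_of_lt hTmax0)]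
        _ ≤ _ := h3
    · exact Real.rpow_le_rpow_of_nonpos hTmin0 h1 (by linarith)
  have hTpow0 : ∀ x ∈ Ω, ∀ y ∈ Ω, 0 < T x y ^ (1 - σ) := by
    intro x hx y hy
    exact Real.rpow_pos_of_pos (lt_of_lt_of_le hTmin0 (hT x hx y hy).1) _
  -- κ
  set κ : ℝ := μ / σ * (P * Q) with hκdef
  have hκeq : κ = μ / σ * (Tmax / Tmin) ^ (σ - 1) := by
    rw [hκdef, hPdef, hQdef, Real.div_rpow (le_of_lt hTmax0) (le_of_lt hTmin0),
      show (1 - σ) = -(σ - 1) by ring, Real.rpow_neg (le_of_lt hTmin0)]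
    ring
  have hκ0 : 0 < κ := by positivity
  have hratio : (1:ℝ) < (Λ + b) / (Λ - b) := by
    rw [lt_div_iff₀ hΛb]; linarith
  have hcond' : κ * ((Λ + b) / (Λ - b)) < 1 := by rw [hκeq]; exact hcond
  have hκ1 : κ < 1 := by
    have h5 := mul_le_mul_of_nonneg_left (le_of_lt hratio) (le_of_lt hκ0)
    rw [mul_one] at h5
    linarith
  -- bound M on sup norms of solutions
  set M : ℝ := κ * Φ / ((1 - κ) * (Λ - b)) with hMdef
  have hM0 : 0 < M := by
    apply div_pos (by positivity)
    exact mul_pos (by linarith) hΛb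
  -- sup norm machinery
  have supLe : ∀ f : (Fin n → ℝ) → ℝ, ContinuousOn f Ω → ∀ x ∈ Ω, |f x| ≤ supNormOn Ω f := by
    intro f hf x hx
    exact le_csSup ((hΩc.image_of_continuousOn hf.abs).bddAbove) ⟨x, hx, rfl⟩
  have supNorm_le : ∀ (f : (Fin n → ℝ) → ℝ) (cst : ℝ), (∀ x ∈ Ω, |f x| ≤ cst) →
      supNormOn Ω f ≤ cst := by
    intro f cst h
    apply csSup_le (Set.Nonempty.image _ ⟨x₀, hx₀⟩)
    rintro z ⟨x, hx, rfl⟩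
    exact h x hx
  -- slice continuity
  have sliceCont : ∀ y ∈ Ω, ContinuousOn (fun z => T y z ^ (1 - σ)) Ω := by
    intro y hy
    have h1 : ContinuousOn (fun z => T y z) Ω := by
      have hc : Continuous fun z : Fin n → ℝ => ((y, z) : (Fin n → ℝ) × (Fin n → ℝ)) :=
        Continuous.prodMk_right y
      exact hTcont.comp hc.continuousOn (fun z hz => Set.mk_mem_prod hy hz)
    exact h1.rpow_const (fun z hz => Or.inl (ne_of_gt (lt_of_lt_of_le hTmin0 (hT y hy z hz).1)))
  have sliceCont' : ∀ x ∈ Ω, ContinuousOn (fun y => T x y ^ (1 - σ)) Ω := sliceCont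
  -- key facts about the inner integral
  have keyI : ∀ lam : (Fin n → ℝ) → ℝ, IntegrableOn lam Ω →
      ∀ y ∈ Ω, IntegrableOn (fun z => |lam z| * T y z ^ (1 - σ)) Ω ∧
        P⁻¹ * (∫ x in Ω, |lam x|) ≤ (∫ z in Ω, |lam z| * T y z ^ (1 - σ)) ∧
        (∫ z in Ω, |lam z| * T y z ^ (1 - σ)) ≤ Q * (∫ x in Ω, |lam x|) := by
    intro lam hli y hy
    have habs : IntegrableOn (fun z => |lam z|) Ω := hli.abs
    have hmeas : AEStronglyMeasurable (fun z => |lam z| * T y z ^ (1 - σ))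
        (volume.restrict Ω) :=
      habs.aestronglyMeasurable.mul ((sliceCont y hy).aestronglyMeasurable hΩm)
    have hbd : ∀ᵐ z ∂(volume.restrict Ω),
        ‖|lam z| * T y z ^ (1 - σ)‖ ≤ ‖|lam z|‖ := by
      filter_upwards [ae_restrict_mem hΩm] with z hz
      have h1 := (hTpow y hy z hz).2
      have h0 := hTpow0 y hy z hz
      rw [Real.norm_eq_abs, Real.norm_eq_abs, abs_abs,
        abs_of_nonneg (by positivity)]
      exact mul_le_of_le_one_right (abs_nonneg _) (le_trans h1 hQ1)
    have hint : IntegrableOn (fun z => |lam z| * T y z ^ (1 - σ)) Ω :=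
      Integrable.mono habs hmeas hbd
    refine ⟨hint, ?_, ?_⟩
    · have h2 : (∫ z in Ω, P⁻¹ * |lam z|) ≤ ∫ z in Ω, |lam z| * T y z ^ (1 - σ) := by
        apply integral_mono_ae (habs.const_mul _) hint
        filter_upwards [ae_restrict_mem hΩm] with z hz
        have h1 := (hTpow y hy z hz).1
        calc P⁻¹ * |lam z| = |lam z| * P⁻¹ := by ring
          _ ≤ |lam z| * T y z ^ (1 - σ) := mul_le_mul_of_nonneg_left h1 (abs_nonneg _)
      rwa [integral_const_mul] at h2
    · have h2 : (∫ z in Ω, |lam z| * T y z ^ (1 - σ)) ≤ ∫ z in Ω, Q * |lam z| := by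
        apply integral_mono_ae hint (habs.const_mul _)
        filter_upwards [ae_restrict_mem hΩm] with z hz
        have h1 := (hTpow y hy z hz).2
        calc |lam z| * T y z ^ (1 - σ) ≤ |lam z| * Q := mul_le_mul_of_nonneg_left h1 (abs_nonneg _)
          _ = Q * |lam z| := by ring
      rwa [integral_const_mul] at h2
  -- G^{σ-1} = F / I
  have keyG : ∀ lam : (Fin n → ℝ) → ℝ, IntegrableOn lam Ω →
      Λ - b ≤ (∫ x in Ω, |lam x|) → ∀ y ∈ Ω,
      priceIndex Ω F σ T lam y ^ (σ - 1) = F / (∫ z in Ω, |lam z| * T y z ^ (1 - σ)) := by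
    intro lam hli hL y hy
    have hL0 : (0:ℝ) < ∫ x in Ω, |lam x| := lt_of_lt_of_le hΛb hL
    have hI := (keyI lam hli y hy).2.1
    have hI0 : (0:ℝ) < ∫ z in Ω, |lam z| * T y z ^ (1 - σ) :=
      lt_of_lt_of_le (by positivity) hI
    have ha0 : (0:ℝ) ≤ (1 / F) * ∫ z in Ω, |lam z| * T y z ^ (1 - σ) := by positivity
    have h1σ : (1:ℝ) - σ ≠ 0 := by linarith
    have hexp : (1 / (1 - σ)) * (σ - 1) = -1 := by field_simp; ring
    simp only [priceIndex]
    rw [← Real.rpow_mul ha0, hexp, Real.rpow_neg_one]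
    rw [one_div, mul_inv, inv_inv, ← div_eq_mul_inv]
  -- bounds for G^{σ-1}
  have keyGb : ∀ lam : (Fin n → ℝ) → ℝ, IntegrableOn lam Ω →
      Λ - b ≤ (∫ x in Ω, |lam x|) → ∀ y ∈ Ω,
      0 ≤ priceIndex Ω F σ T lam y ^ (σ - 1) ∧
      priceIndex Ω F σ T lam y ^ (σ - 1) ≤ F * P / (∫ x in Ω, |lam x|) := by
    intro lam hli hL y hy
    have hL0 : (0:ℝ) < ∫ x in Ω, |lam x| := lt_of_lt_of_le hΛb hL
    obtain ⟨hint, hIl, hIu⟩ := keyI lam hli y hy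
    have hI0 : (0:ℝ) < ∫ z in Ω, |lam z| * T y z ^ (1 - σ) :=
      lt_of_lt_of_le (by positivity) hIl
    rw [keyG lam hli hL y hy]
    constructor
    · positivity
    · rw [div_le_div_iff₀ hI0 hL0]
      have hLP : (∫ x in Ω, |lam x|) ≤ P * ∫ z in Ω, |lam z| * T y z ^ (1 - σ) := by
        have h3 := mul_le_mul_of_nonneg_left hIl (le_of_lt hP0)
        calc (∫ x in Ω, |lam x|) = P * (P⁻¹ * ∫ x in Ω, |lam x|) := by
              field_simp
          _ ≤ P * ∫ z in Ω, |lam z| * T y z ^ (1 - σ) := h3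
      calc F * ∫ x in Ω, |lam x| ≤ F * (P * ∫ z in Ω, |lam z| * T y z ^ (1 - σ)) :=
            mul_le_mul_of_nonneg_left hLP (le_of_lt hF)
        _ = F * P * ∫ z in Ω, |lam z| * T y z ^ (1 - σ) := by ring
  -- measurability of G^{σ-1}
  have keyMeas : ∀ lam : (Fin n → ℝ) → ℝ, IntegrableOn lam Ω →
      Λ - b ≤ (∫ x in Ω, |lam x|) →
      AEStronglyMeasurable (fun y => priceIndex Ω F σ T lam y ^ (σ - 1))
        (volume.restrict Ω) := by
    intro lam hli hL
    have hprod : ContinuousOn (fun p : (Fin n → ℝ) × (Fin n → ℝ) => T p.1 p.2 ^ (1 - σ))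
        (Ω ×ˢ Ω) :=
      hTcont.rpow_const (fun p hp => Or.inl (ne_of_gt (lt_of_lt_of_le hTmin0 (hT p.1 hp.1 p.2 hp.2).1)))
    have h2 : AEStronglyMeasurable
        (fun p : (Fin n → ℝ) × (Fin n → ℝ) => |lam p.2| * T p.1 p.2 ^ (1 - σ))
        ((volume.restrict Ω).prod (volume.restrict Ω)) := by
      refine AEStronglyMeasurable.mul ?_ ?_
      · exact (hli.abs.aestronglyMeasurable).comp_snd
      · rw [Measure.prod_restrict]
        exact hprod.aestronglyMeasurable (hΩm.prod hΩm)
    have hI : AEStronglyMeasurable (fun y => ∫ z in Ω, |lam z| * T y z ^ (1 - σ))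
        (volume.restrict Ω) := h2.integral_prod_right'
    have hdiv : AEStronglyMeasurable
        (fun y => F / (∫ z in Ω, |lam z| * T y z ^ (1 - σ))) (volume.restrict Ω) :=
      (aemeasurable_const.div hI.aemeasurable).aestronglyMeasurable
    apply hdiv.congr
    filter_upwards [ae_restrict_mem hΩm] with y hy
    exact (keyG lam hli hL y hy).symm
  -- integrability of the fixed-point integrand
  have keyInt : ∀ lam W : (Fin n → ℝ) → ℝ, IntegrableOn lam Ω →
      Λ - b ≤ (∫ x in Ω, |lam x|) → ContinuousOn W Ω → ∀ x ∈ Ω,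
      IntegrableOn (fun y => (W y * |lam y| + φ y) *
        priceIndex Ω F σ T lam y ^ (σ - 1) * T x y ^ (1 - σ)) Ω := by
    intro lam W hli hL hW x hx
    have hL0 : (0:ℝ) < ∫ x in Ω, |lam x| := lt_of_lt_of_le hΛb hL
    have hMW0 : 0 ≤ supNormOn Ω W := le_trans (abs_nonneg _) (supLe W hW x₀ hx₀)
    have hmeas : AEStronglyMeasurable (fun y => (W y * |lam y| + φ y) *
        priceIndex Ω F σ T lam y ^ (σ - 1) * T x y ^ (1 - σ)) (volume.restrict Ω) :=
      ((((hW.aestronglyMeasurable hΩm).mul hli.abs.aestronglyMeasurable).add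
        hφint.aestronglyMeasurable).mul (keyMeas lam hli hL)).mul
        ((sliceCont x hx).aestronglyMeasurable hΩm)
    have hdom : Integrable (fun y => (supNormOn Ω W * |lam y| + |φ y|) * (F * P / (Λ - b)))
        (volume.restrict Ω) :=
      ((hli.abs.const_mul _).add hφint.abs).mul_const _
    apply Integrable.mono hdom hmeas
    filter_upwards [ae_restrict_mem hΩm] with y hy
    have hGb := keyGb lam hli hL y hy
    have hG1 : priceIndex Ω F σ T lam y ^ (σ - 1) ≤ F * P / (Λ - b) := by
      refine le_trans hGb.2 ?_
      gcongr
    have hWy : |W y| ≤ supNormOn Ω W := supLe W hW y hy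
    have tb := (hTpow x hx y hy).2
    have t0 := hTpow0 x hx y hy
    have hA : |W y * |lam y| + φ y| ≤ supNormOn Ω W * |lam y| + |φ y| := by
      refine le_trans (abs_add_le _ _) ?_
      rw [abs_mul, abs_abs]
      exact add_le_add (mul_le_mul_of_nonneg_right hWy (abs_nonneg _)) le_rfl
    have hB0 : (0:ℝ) ≤ supNormOn Ω W * |lam y| + |φ y| := by positivity
    rw [Real.norm_eq_abs, Real.norm_eq_abs, abs_mul, abs_mul,
      abs_of_nonneg hGb.1, abs_of_nonneg (le_of_lt t0),
      abs_of_nonneg (show (0:ℝ) ≤ (supNormOn Ω W * |lam y| + |φ y|) * (F * P / (Λ - b)) by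
        positivity)]
    calc |W y * |lam y| + φ y| * priceIndex Ω F σ T lam y ^ (σ - 1) * T x y ^ (1 - σ)
        ≤ (supNormOn Ω W * |lam y| + |φ y|) * (F * P / (Λ - b)) * 1 := by
          have htb1 : T x y ^ (1 - σ) ≤ 1 := le_trans tb hQ1
          have hGb0 := hGb.1
          gcongr
      _ = (supNormOn Ω W * |lam y| + |φ y|) * (F * P / (Λ - b)) := by ring
  -- uniform bound on solutions
  have keySup : ∀ lam W : (Fin n → ℝ) → ℝ, IntegrableOn lam Ω →
      Λ - b ≤ (∫ x in Ω, |lam x|) → (∫ x in Ω, |lam x|) ≤ Λ + b →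
      IsWageSolution Ω F σ μ T φ lam W → supNormOn Ω W ≤ M := by
    intro lam W hli hL hL' hsol
    obtain ⟨hWc, hW0, hWeq⟩ := hsol
    have hL0 : (0:ℝ) < ∫ x in Ω, |lam x| := lt_of_lt_of_le hΛb hL
    have hMW0 : 0 ≤ supNormOn Ω W := le_trans (abs_nonneg _) (supLe W hWc x₀ hx₀)
    have hstep : supNormOn Ω W ≤ κ * supNormOn Ω W + κ * Φ / (Λ - b) := by
      apply supNorm_le
      intro x hx
      rw [abs_of_nonneg (hW0 x hx), hWeq x hx]
      have hfi := keyInt lam W hli hL hWc x hx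
      have hgi : Integrable (fun y => (supNormOn Ω W * |lam y| + φ y) *
          (F * P / (∫ x in Ω, |lam x|) * Q)) (volume.restrict Ω) :=
        ((hli.abs.const_mul _).add hφint).mul_const _
      have hmono : (∫ y in Ω, (W y * |lam y| + φ y) *
          priceIndex Ω F σ T lam y ^ (σ - 1) * T x y ^ (1 - σ))
          ≤ ∫ y in Ω, (supNormOn Ω W * |lam y| + φ y) *
            (F * P / (∫ x in Ω, |lam x|) * Q) := by
        apply integral_mono_ae hfi hgi
        filter_upwards [ae_restrict_mem hΩm, hφ0] with y hy hφy
        have hGb := keyGb lam hli hL y hy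
        have hWy : W y ≤ supNormOn Ω W := le_trans (le_abs_self _) (supLe W hWc y hy)
        have hWy0 : 0 ≤ W y := hW0 y hy
        have tb := (hTpow x hx y hy).2
        have t0 := hTpow0 x hx y hy
        have hB0 : 0 ≤ W y * |lam y| + φ y := by positivity
        calc (W y * |lam y| + φ y) * priceIndex Ω F σ T lam y ^ (σ - 1) * T x y ^ (1 - σ)
            ≤ (W y * |lam y| + φ y) * (F * P / (∫ x in Ω, |lam x|)) * Q := by
              have hGb0 := hGb.1
              have hGb2 := hGb.2
              gcongr
          _ ≤ (supNormOn Ω W * |lam y| + φ y) * (F * P / (∫ x in Ω, |lam x|)) * Q := by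
              have h6 : W y * |lam y| + φ y ≤ supNormOn Ω W * |lam y| + φ y :=
                add_le_add (mul_le_mul_of_nonneg_right hWy (abs_nonneg _)) le_rfl
              have h7 : (0:ℝ) ≤ F * P / (∫ x in Ω, |lam x|) := by positivity
              exact mul_le_mul_of_nonneg_right (mul_le_mul_of_nonneg_right h6 h7) (le_of_lt hQ0)
          _ = (supNormOn Ω W * |lam y| + φ y) * (F * P / (∫ x in Ω, |lam x|) * Q) := by
              ring
      have hval : (∫ y in Ω, (supNormOn Ω W * |lam y| + φ y) *
          (F * P / (∫ x in Ω, |lam x|) * Q))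
          = (supNormOn Ω W * (∫ x in Ω, |lam x|) + Φ) *
            (F * P / (∫ x in Ω, |lam x|) * Q) := by
        rw [integral_mul_const, integral_add (hli.abs.const_mul _) hφint,
          integral_const_mul, hφΦ]
      have hc0 : (0:ℝ) ≤ μ / (σ * F) := by positivity
      calc μ / (σ * F) * ∫ y in Ω, (W y * |lam y| + φ y) *
            priceIndex Ω F σ T lam y ^ (σ - 1) * T x y ^ (1 - σ)
          ≤ μ / (σ * F) * ((supNormOn Ω W * (∫ x in Ω, |lam x|) + Φ) *
            (F * P / (∫ x in Ω, |lam x|) * Q)) := by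
            rw [← hval]; exact mul_le_mul_of_nonneg_left hmono hc0
        _ = κ * supNormOn Ω W + κ * Φ / (∫ x in Ω, |lam x|) := by
            rw [hκdef]; field_simp
        _ ≤ κ * supNormOn Ω W + κ * Φ / (Λ - b) := by
            gcongr
    have h8 : κ * Φ / (Λ - b) * (Λ - b) = κ * Φ := div_mul_cancel₀ _ (ne_of_gt hΛb)
    rw [hMdef, le_div_iff₀ (mul_pos (by linarith) hΛb)]
    linarith [mul_le_mul_of_nonneg_right hstep (le_of_lt hΛb), h8]
  -- the Lipschitz constant
  set K : ℝ := μ / (σ * F) * (M * (F * P / (Λ - b))) +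
      μ / (σ * F) * ((M * (Λ + b) + Φ) * (F * Q * P * P / ((Λ - b) * (Λ - b)))) with hKdef
  have hK0 : 0 < K := by
    rw [hKdef]
    have h1 : (0:ℝ) < μ / (σ * F) := by positivity
    have h2 : (0:ℝ) < F * P / (Λ - b) := div_pos (by positivity) hΛb
    have h3 : (0:ℝ) < F * Q * P * P / ((Λ - b) * (Λ - b)) :=
      div_pos (by positivity) (mul_pos hΛb hΛb)
    have h4 : (0:ℝ) < M * (Λ + b) + Φ := add_pos (mul_pos hM0 (by linarith)) hΦ
    have h5 := mul_pos h1 (mul_pos hM0 h2)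
    have h6 := mul_pos h1 (mul_pos h4 h3)
    linarith
  refine ⟨K / (1 - κ), div_pos hK0 (by linarith), ?_⟩
  intro lam₁ lam₂ hli₁ hli₂ hL₁l hL₁u hL₂l hL₂u W₁ W₂ hsol₁ hsol₂
  have hL₁0 : (0:ℝ) < ∫ x in Ω, |lam₁ x| := lt_of_lt_of_le hΛb hL₁l
  have hL₂0 : (0:ℝ) < ∫ x in Ω, |lam₂ x| := lt_of_lt_of_le hΛb hL₂l
  obtain ⟨hW₁c, hW₁0, hW₁eq⟩ := hsol₁
  obtain ⟨hW₂c, hW₂0, hW₂eq⟩ := hsol₂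
  have hM₂ : supNormOn Ω W₂ ≤ M := keySup lam₂ W₂ hli₂ hL₂l hL₂u ⟨hW₂c, hW₂0, hW₂eq⟩
  set Dl : ℝ := ∫ x in Ω, |lam₁ x - lam₂ x| with hDldef
  have hDl0 : 0 ≤ Dl := integral_nonneg (fun y => abs_nonneg _)
  set DW : ℝ := supNormOn Ω (fun x => W₁ x - W₂ x) with hDWdef
  have hdiffc : ContinuousOn (fun x => W₁ x - W₂ x) Ω := hW₁c.sub hW₂c
  have hDW0 : 0 ≤ DW := le_trans (abs_nonneg _) (supLe _ hdiffc x₀ hx₀)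
  -- bound on the difference of inner integrals
  have hDI : ∀ y ∈ Ω,
      |(∫ z in Ω, |lam₁ z| * T y z ^ (1 - σ)) - (∫ z in Ω, |lam₂ z| * T y z ^ (1 - σ))|
        ≤ Q * Dl := by
    intro y hy
    have hint₁ := (keyI lam₁ hli₁ y hy).1
    have hint₂ := (keyI lam₂ hli₂ y hy).1
    rw [← integral_sub hint₁ hint₂]
    have habs : (∫ z in Ω, |(|lam₁ z| * T y z ^ (1 - σ) - |lam₂ z| * T y z ^ (1 - σ))|)
        ≤ ∫ z in Ω, Q * |lam₁ z - lam₂ z| := by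
      apply integral_mono_ae (hint₁.sub hint₂).abs ((hli₁.sub hli₂).abs.const_mul _)
      filter_upwards [ae_restrict_mem hΩm] with z hz
      have tb := (hTpow y hy z hz).2
      have t0 := hTpow0 y hy z hz
      show |(|lam₁ z| * T y z ^ (1 - σ) - |lam₂ z| * T y z ^ (1 - σ))| ≤ Q * |lam₁ z - lam₂ z|
      have h9 : |lam₁ z| * T y z ^ (1 - σ) - |lam₂ z| * T y z ^ (1 - σ)
          = (|lam₁ z| - |lam₂ z|) * T y z ^ (1 - σ) := by ring
      rw [h9, abs_mul, abs_of_nonneg (le_of_lt t0)]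
      have h10 : |(|lam₁ z| - |lam₂ z|)| ≤ |lam₁ z - lam₂ z| := abs_abs_sub_abs_le_abs_sub _ _
      calc |(|lam₁ z| - |lam₂ z|)| * T y z ^ (1 - σ)
          ≤ |lam₁ z - lam₂ z| * Q := mul_le_mul h10 tb (le_of_lt t0) (abs_nonneg _)
        _ = Q * |lam₁ z - lam₂ z| := by ring
    calc |∫ z in Ω, (|lam₁ z| * T y z ^ (1 - σ) - |lam₂ z| * T y z ^ (1 - σ))|
        ≤ ∫ z in Ω, |(|lam₁ z| * T y z ^ (1 - σ) - |lam₂ z| * T y z ^ (1 - σ))| := by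
          rw [← Real.norm_eq_abs]
          refine le_trans (norm_integral_le_integral_norm _) ?_
          simp [Real.norm_eq_abs]
      _ ≤ ∫ z in Ω, Q * |lam₁ z - lam₂ z| := habs
      _ = Q * Dl := by rw [integral_const_mul]
  -- bound on the difference of G^{σ-1}
  have hΔG : ∀ y ∈ Ω,
      |priceIndex Ω F σ T lam₁ y ^ (σ - 1) - priceIndex Ω F σ T lam₂ y ^ (σ - 1)|
        ≤ F * Q * P * P / ((Λ - b) * (Λ - b)) * Dl := by
    intro y hy
    have hI₁l := (keyI lam₁ hli₁ y hy).2.1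
    have hI₂l := (keyI lam₂ hli₂ y hy).2.1
    have hI₁0 : (0:ℝ) < ∫ z in Ω, |lam₁ z| * T y z ^ (1 - σ) :=
      lt_of_lt_of_le (by positivity) hI₁l
    have hI₂0 : (0:ℝ) < ∫ z in Ω, |lam₂ z| * T y z ^ (1 - σ) :=
      lt_of_lt_of_le (by positivity) hI₂l
    have hI₁l' : P⁻¹ * (Λ - b) ≤ ∫ z in Ω, |lam₁ z| * T y z ^ (1 - σ) :=
      le_trans (mul_le_mul_of_nonneg_left hL₁l (le_of_lt (inv_pos.mpr hP0))) hI₁l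
    have hI₂l' : P⁻¹ * (Λ - b) ≤ ∫ z in Ω, |lam₂ z| * T y z ^ (1 - σ) :=
      le_trans (mul_le_mul_of_nonneg_left hL₂l (le_of_lt (inv_pos.mpr hP0))) hI₂l
    rw [keyG lam₁ hli₁ hL₁l y hy, keyG lam₂ hli₂ hL₂l y hy]
    rw [div_sub_div _ _ (ne_of_gt hI₁0) (ne_of_gt hI₂0)]
    rw [abs_div, abs_of_pos (mul_pos hI₁0 hI₂0)]
    have hnum : |F * (∫ z in Ω, |lam₂ z| * T y z ^ (1 - σ))
        - (∫ z in Ω, |lam₁ z| * T y z ^ (1 - σ)) * F| ≤ F * (Q * Dl) := by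
      have h11 : F * (∫ z in Ω, |lam₂ z| * T y z ^ (1 - σ))
          - (∫ z in Ω, |lam₁ z| * T y z ^ (1 - σ)) * F
          = -(F * ((∫ z in Ω, |lam₁ z| * T y z ^ (1 - σ))
            - (∫ z in Ω, |lam₂ z| * T y z ^ (1 - σ)))) := by ring
      rw [h11, abs_neg, abs_mul, abs_of_pos hF]
      exact mul_le_mul_of_nonneg_left (hDI y hy) (le_of_lt hF)
    have hden : P⁻¹ * (Λ - b) * (P⁻¹ * (Λ - b))
        ≤ (∫ z in Ω, |lam₁ z| * T y z ^ (1 - σ)) * (∫ z in Ω, |lam₂ z| * T y z ^ (1 - σ)) := by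
      have hd0 : (0:ℝ) < P⁻¹ * (Λ - b) := by positivity
      exact mul_le_mul hI₁l' hI₂l' (le_of_lt hd0) (le_of_lt hI₁0)
    calc |F * (∫ z in Ω, |lam₂ z| * T y z ^ (1 - σ))
          - (∫ z in Ω, |lam₁ z| * T y z ^ (1 - σ)) * F| /
          ((∫ z in Ω, |lam₁ z| * T y z ^ (1 - σ)) * (∫ z in Ω, |lam₂ z| * T y z ^ (1 - σ)))
        ≤ (F * (Q * Dl)) / (P⁻¹ * (Λ - b) * (P⁻¹ * (Λ - b))) := by
          apply div_le_div₀ (by positivity) hnum (by positivity) hden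
      _ = F * Q * P * P / ((Λ - b) * (Λ - b)) * Dl := by
          field_simp
  -- main pointwise estimate
  have hmain : ∀ x ∈ Ω, |W₁ x - W₂ x| ≤ κ * DW + K * Dl := by
    intro x hx
    have hfi₁ := keyInt lam₁ W₁ hli₁ hL₁l hW₁c x hx
    have hfi₂ := keyInt lam₂ W₂ hli₂ hL₂l hW₂c x hx
    -- the dominating function g
    have hgi₁ : Integrable (fun y => DW * |lam₁ y| * (F * P / (∫ x in Ω, |lam₁ x|) * Q))
        (volume.restrict Ω) := (hli₁.abs.const_mul _).mul_const _
    have hgi₂ : Integrable (fun y => M * (F * P / (Λ - b)) * |lam₁ y - lam₂ y|)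
        (volume.restrict Ω) := (hli₁.sub hli₂).abs.const_mul _
    have hgi₃ : Integrable (fun y => (M * |lam₂ y| + φ y) *
        (F * Q * P * P / ((Λ - b) * (Λ - b)) * Dl)) (volume.restrict Ω) :=
      ((hli₂.abs.const_mul _).add hφint).mul_const _
    have hptw : ∀ᵐ y ∂(volume.restrict Ω),
        |(W₁ y * |lam₁ y| + φ y) * priceIndex Ω F σ T lam₁ y ^ (σ - 1) * T x y ^ (1 - σ)
          - (W₂ y * |lam₂ y| + φ y) * priceIndex Ω F σ T lam₂ y ^ (σ - 1) * T x y ^ (1 - σ)|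
        ≤ DW * |lam₁ y| * (F * P / (∫ x in Ω, |lam₁ x|) * Q)
          + M * (F * P / (Λ - b)) * |lam₁ y - lam₂ y|
          + (M * |lam₂ y| + φ y) * (F * Q * P * P / ((Λ - b) * (Λ - b)) * Dl) := by
      filter_upwards [ae_restrict_mem hΩm, hφ0] with y hy hφy
      have hG₁b := keyGb lam₁ hli₁ hL₁l y hy
      have hG₂b := keyGb lam₂ hli₂ hL₂l y hy
      have hΔGy := hΔG y hy
      have tb := (hTpow x hx y hy).2
      have t0 := hTpow0 x hx y hy
      have hW₂y0 : 0 ≤ W₂ y := hW₂0 y hy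
      have hW₂y : W₂ y ≤ M :=
        le_trans (le_trans (le_abs_self _) (supLe W₂ hW₂c y hy)) hM₂
      have hWd : |W₁ y - W₂ y| ≤ DW := supLe _ hdiffc y hy
      have hG₁' : priceIndex Ω F σ T lam₁ y ^ (σ - 1) ≤ F * P / (Λ - b) := by
        refine le_trans hG₁b.2 ?_
        gcongr
      have hid : (W₁ y * |lam₁ y| + φ y) * priceIndex Ω F σ T lam₁ y ^ (σ - 1) * T x y ^ (1 - σ)
          - (W₂ y * |lam₂ y| + φ y) * priceIndex Ω F σ T lam₂ y ^ (σ - 1) * T x y ^ (1 - σ)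
          = (W₁ y - W₂ y) * |lam₁ y| * priceIndex Ω F σ T lam₁ y ^ (σ - 1) * T x y ^ (1 - σ)
          + W₂ y * (|lam₁ y| - |lam₂ y|) * priceIndex Ω F σ T lam₁ y ^ (σ - 1) * T x y ^ (1 - σ)
          + (W₂ y * |lam₂ y| + φ y) *
            (priceIndex Ω F σ T lam₁ y ^ (σ - 1) - priceIndex Ω F σ T lam₂ y ^ (σ - 1)) *
            T x y ^ (1 - σ) := by ring
      rw [hid]
      have e₁ : |(W₁ y - W₂ y) * |lam₁ y| * priceIndex Ω F σ T lam₁ y ^ (σ - 1) *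
          T x y ^ (1 - σ)| ≤ DW * |lam₁ y| * (F * P / (∫ x in Ω, |lam₁ x|) * Q) := by
        rw [abs_mul, abs_mul, abs_mul, abs_abs, abs_of_nonneg hG₁b.1,
          abs_of_nonneg (le_of_lt t0)]
        calc |W₁ y - W₂ y| * |lam₁ y| * priceIndex Ω F σ T lam₁ y ^ (σ - 1) * T x y ^ (1 - σ)
            ≤ DW * |lam₁ y| * (F * P / (∫ x in Ω, |lam₁ x|)) * Q := by
              have hG₁b0 := hG₁b.1
              have hG₁b2 := hG₁b.2
              gcongr
              all_goals first
                | assumption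
                | positivity
                | exact mul_nonneg (mul_nonneg hDW0 (abs_nonneg _)) (by positivity)
          _ = DW * |lam₁ y| * (F * P / (∫ x in Ω, |lam₁ x|) * Q) := by ring
      have e₂ : |W₂ y * (|lam₁ y| - |lam₂ y|) * priceIndex Ω F σ T lam₁ y ^ (σ - 1) *
          T x y ^ (1 - σ)| ≤ M * (F * P / (Λ - b)) * |lam₁ y - lam₂ y| := by
        rw [abs_mul, abs_mul, abs_mul, abs_of_nonneg hW₂y0, abs_of_nonneg hG₁b.1,
          abs_of_nonneg (le_of_lt t0)]
        have h10 : |(|lam₁ y| - |lam₂ y|)| ≤ |lam₁ y - lam₂ y| := abs_abs_sub_abs_le_abs_sub _ _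
        calc W₂ y * |(|lam₁ y| - |lam₂ y|)| * priceIndex Ω F σ T lam₁ y ^ (σ - 1) *
            T x y ^ (1 - σ)
            ≤ M * |lam₁ y - lam₂ y| * (F * P / (Λ - b)) * 1 := by
              have hG₁b0 := hG₁b.1
              have htb1 : T x y ^ (1 - σ) ≤ 1 := le_trans tb hQ1
              gcongr
          _ = M * (F * P / (Λ - b)) * |lam₁ y - lam₂ y| := by ring
      have e₃ : |(W₂ y * |lam₂ y| + φ y) *
          (priceIndex Ω F σ T lam₁ y ^ (σ - 1) - priceIndex Ω F σ T lam₂ y ^ (σ - 1)) *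
          T x y ^ (1 - σ)|
          ≤ (M * |lam₂ y| + φ y) * (F * Q * P * P / ((Λ - b) * (Λ - b)) * Dl) := by
        rw [abs_mul, abs_mul, abs_of_nonneg (le_of_lt t0),
          abs_of_nonneg (show 0 ≤ W₂ y * |lam₂ y| + φ y by positivity)]
        calc (W₂ y * |lam₂ y| + φ y) *
            |priceIndex Ω F σ T lam₁ y ^ (σ - 1) - priceIndex Ω F σ T lam₂ y ^ (σ - 1)| *
            T x y ^ (1 - σ)
            ≤ (M * |lam₂ y| + φ y) * (F * Q * P * P / ((Λ - b) * (Λ - b)) * Dl) * 1 := by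
              have hWl : W₂ y * |lam₂ y| ≤ M * |lam₂ y| :=
                mul_le_mul_of_nonneg_right hW₂y (abs_nonneg _)
              have htb1 : T x y ^ (1 - σ) ≤ 1 := le_trans tb hQ1
              gcongr
          _ = (M * |lam₂ y| + φ y) * (F * Q * P * P / ((Λ - b) * (Λ - b)) * Dl) := by ring
      calc |(W₁ y - W₂ y) * |lam₁ y| * priceIndex Ω F σ T lam₁ y ^ (σ - 1) * T x y ^ (1 - σ)
          + W₂ y * (|lam₁ y| - |lam₂ y|) * priceIndex Ω F σ T lam₁ y ^ (σ - 1) * T x y ^ (1 - σ)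
          + (W₂ y * |lam₂ y| + φ y) *
            (priceIndex Ω F σ T lam₁ y ^ (σ - 1) - priceIndex Ω F σ T lam₂ y ^ (σ - 1)) *
            T x y ^ (1 - σ)|
          ≤ |(W₁ y - W₂ y) * |lam₁ y| * priceIndex Ω F σ T lam₁ y ^ (σ - 1) * T x y ^ (1 - σ)|
          + |W₂ y * (|lam₁ y| - |lam₂ y|) * priceIndex Ω F σ T lam₁ y ^ (σ - 1) *
              T x y ^ (1 - σ)|
          + |(W₂ y * |lam₂ y| + φ y) *
            (priceIndex Ω F σ T lam₁ y ^ (σ - 1) - priceIndex Ω F σ T lam₂ y ^ (σ - 1)) *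
            T x y ^ (1 - σ)| := abs_add_three _ _ _
        _ ≤ _ := by
          exact add_le_add (add_le_add e₁ e₂) e₃
    -- putting it together
    rw [hW₁eq x hx, hW₂eq x hx, ← mul_sub, ← integral_sub hfi₁ hfi₂]
    have hcabs : |μ / (σ * F)| = μ / (σ * F) := abs_of_pos (by positivity)
    rw [abs_mul, hcabs]
    have hgint : Integrable (fun y => DW * |lam₁ y| * (F * P / (∫ x in Ω, |lam₁ x|) * Q)
        + M * (F * P / (Λ - b)) * |lam₁ y - lam₂ y|
        + (M * |lam₂ y| + φ y) * (F * Q * P * P / ((Λ - b) * (Λ - b)) * Dl))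
        (volume.restrict Ω) := (hgi₁.add hgi₂).add hgi₃
    have habs2 : |∫ y in Ω, ((W₁ y * |lam₁ y| + φ y) *
          priceIndex Ω F σ T lam₁ y ^ (σ - 1) * T x y ^ (1 - σ)
          - (W₂ y * |lam₂ y| + φ y) * priceIndex Ω F σ T lam₂ y ^ (σ - 1) * T x y ^ (1 - σ))|
        ≤ ∫ y in Ω, (DW * |lam₁ y| * (F * P / (∫ x in Ω, |lam₁ x|) * Q)
          + M * (F * P / (Λ - b)) * |lam₁ y - lam₂ y|
          + (M * |lam₂ y| + φ y) * (F * Q * P * P / ((Λ - b) * (Λ - b)) * Dl)) := by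
      refine le_trans ?_ (integral_mono_ae (hfi₁.sub hfi₂).abs hgint hptw)
      rw [← Real.norm_eq_abs]
      refine le_trans (norm_integral_le_integral_norm _) ?_
      simp [Real.norm_eq_abs]
    have hgi₁₂ : Integrable (fun y => DW * |lam₁ y| * (F * P / (∫ x in Ω, |lam₁ x|) * Q)
        + M * (F * P / (Λ - b)) * |lam₁ y - lam₂ y|) (volume.restrict Ω) := hgi₁.add hgi₂
    have hMφ : Integrable (fun y => M * |lam₂ y| + φ y) (volume.restrict Ω) :=
      (hli₂.abs.const_mul M).add hφint
    have iMφ : (∫ y in Ω, (M * |lam₂ y| + φ y))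
        = M * (∫ x in Ω, |lam₂ x|) + Φ := by
      rw [integral_add (hli₂.abs.const_mul M) hφint, integral_const_mul, hφΦ]
    have hsval : (∫ y in Ω, (DW * |lam₁ y| * (F * P / (∫ x in Ω, |lam₁ x|) * Q)
          + M * (F * P / (Λ - b)) * |lam₁ y - lam₂ y|
          + (M * |lam₂ y| + φ y) * (F * Q * P * P / ((Λ - b) * (Λ - b)) * Dl)))
        = DW * (∫ x in Ω, |lam₁ x|) * (F * P / (∫ x in Ω, |lam₁ x|) * Q)
          + M * (F * P / (Λ - b)) * Dl
          + (M * (∫ x in Ω, |lam₂ x|) + Φ) * (F * Q * P * P / ((Λ - b) * (Λ - b)) * Dl) := by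
      have i1 : (∫ y in Ω, DW * |lam₁ y| * (F * P / (∫ x in Ω, |lam₁ x|) * Q))
          = DW * (∫ x in Ω, |lam₁ x|) * (F * P / (∫ x in Ω, |lam₁ x|) * Q) := by
        rw [integral_mul_const, integral_const_mul]
      have i2 : (∫ y in Ω, M * (F * P / (Λ - b)) * |lam₁ y - lam₂ y|)
          = M * (F * P / (Λ - b)) * Dl := by
        rw [integral_const_mul]
      have i3 : (∫ y in Ω, (M * |lam₂ y| + φ y) * (F * Q * P * P / ((Λ - b) * (Λ - b)) * Dl))
          = (M * (∫ x in Ω, |lam₂ x|) + Φ) * (F * Q * P * P / ((Λ - b) * (Λ - b)) * Dl) := by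
        rw [integral_mul_const, iMφ]
      rw [integral_add hgi₁₂ hgi₃, integral_add hgi₁ hgi₂, i1, i2, i3]
    have hfinal : μ / (σ * F) * (DW * (∫ x in Ω, |lam₁ x|) *
          (F * P / (∫ x in Ω, |lam₁ x|) * Q)
          + M * (F * P / (Λ - b)) * Dl
          + (M * (∫ x in Ω, |lam₂ x|) + Φ) * (F * Q * P * P / ((Λ - b) * (Λ - b)) * Dl))
        ≤ κ * DW + K * Dl := by
      have e1 : μ / (σ * F) * (DW * (∫ x in Ω, |lam₁ x|) *
          (F * P / (∫ x in Ω, |lam₁ x|) * Q)) = κ * DW := by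
        rw [hκdef]; field_simp
      have e3 : M * (∫ x in Ω, |lam₂ x|) + Φ ≤ M * (Λ + b) + Φ :=
        add_le_add (mul_le_mul_of_nonneg_left hL₂u (le_of_lt hM0)) le_rfl
      have h12 : (0:ℝ) ≤ F * Q * P * P / ((Λ - b) * (Λ - b)) * Dl := by positivity
      have h13 : μ / (σ * F) * ((M * (∫ x in Ω, |lam₂ x|) + Φ) *
          (F * Q * P * P / ((Λ - b) * (Λ - b)) * Dl))
          ≤ μ / (σ * F) * ((M * (Λ + b) + Φ) *
            (F * Q * P * P / ((Λ - b) * (Λ - b)) * Dl)) :=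
        mul_le_mul_of_nonneg_left (mul_le_mul_of_nonneg_right e3 h12) (by positivity)
      rw [hKdef]
      linarith [e1, h13]
    calc μ / (σ * F) * |∫ y in Ω, ((W₁ y * |lam₁ y| + φ y) *
          priceIndex Ω F σ T lam₁ y ^ (σ - 1) * T x y ^ (1 - σ)
          - (W₂ y * |lam₂ y| + φ y) * priceIndex Ω F σ T lam₂ y ^ (σ - 1) * T x y ^ (1 - σ))|
        ≤ μ / (σ * F) * (DW * (∫ x in Ω, |lam₁ x|) * (F * P / (∫ x in Ω, |lam₁ x|) * Q)
          + M * (F * P / (Λ - b)) * Dl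
          + (M * (∫ x in Ω, |lam₂ x|) + Φ) * (F * Q * P * P / ((Λ - b) * (Λ - b)) * Dl)) := by
          rw [← hsval]
          exact mul_le_mul_of_nonneg_left habs2 (by positivity)
      _ ≤ κ * DW + K * Dl := hfinal
  -- conclude
  have hstep : DW ≤ κ * DW + K * Dl := supNorm_le _ _ hmain
  rw [div_mul_eq_mul_div, le_div_iff₀ (by linarith : (0:ℝ) < 1 - κ)]
  linarith [hstep]
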